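/- Let n ≥ 5 be an integer and x ∈ ℂ, and let A be the n×n tridiagonal matrix associated with a := x and b := i (where i = √−1). Then det(A) = (x² + 4)·F(n−1), where F(k) denotes the k-th Fibonacci polynomial evaluated at x. -/
import Mathlib


/-- The `n × n` complex tridiagonal matrix `A` (1-based indices): `A_{j,j} = a`,
`A_{1,2} = 2b`, `A_{2,1} = b`, `A_{n-1,n} = b`, `A_{n,n-1} = 2b`,
`A_{j,j+1} = A_{j+1,j} = -b` for `2 ≤ j ≤ n-2`, all other entries `0`. -/
def matA (n : ℕ) (a b : ℂ) : Matrix (Fin n) (Fin n) ℂ :=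
  Matrix.of fun i j =>
    let i' := (i : ℕ) + 1
    let j' := (j : ℕ) + 1
    if i' = j' then a
    else if i' = 1 ∧ j' = 2 then 2 * b
    else if i' = 2 ∧ j' = 1 then b
    else if i' = n - 1 ∧ j' = n then b
    else if i' = n ∧ j' = n - 1 then 2 * b
    else if (i' + 1 = j' ∨ j' + 1 = i') ∧ 2 ≤ min i' j' ∧ min i' j' ≤ n - 2 then -b
    else 0

/-- Fibonacci polynomials evaluated at `x`:
`F 0 = 0`, `F 1 = 1`, `F (k+2) = x * F (k+1) + F k`. -/
def fibP (x : ℂ) : ℕ → ℂ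
  | 0 => 0
  | 1 => 1
  | (k + 2) => x * fibP x (k + 1) + fibP x k

/-- General tridiagonal matrix with diagonal `d`, superdiagonal `u`, subdiagonal `l`. -/
noncomputable def triM (d u l : ℕ → ℂ) (k : ℕ) : Matrix (Fin k) (Fin k) ℂ :=
  Matrix.of fun i j =>
    if (i : ℕ) = j then d i
    else if (i : ℕ) + 1 = j then u i
    else if (j : ℕ) + 1 = i then l j
    else 0

lemma triM_apply (d u l : ℕ → ℂ) (k : ℕ) (i j : Fin k) :
    triM d u l k i j =
      if (i : ℕ) = j then d i
      else if (i : ℕ) + 1 = j then u i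
      else if (j : ℕ) + 1 = i then l j
      else 0 := rfl

lemma triM_minor2 (d u l : ℕ → ℂ) (k : ℕ) :
    (triM d u l (k+2)).submatrix (Fin.last (k+1)).succAbove (Fin.last (k+1)).succAbove
      = triM d u l (k+1) := by
  ext i j
  simp [Matrix.submatrix_apply, Fin.succAbove_last, triM_apply]

lemma triM_minor1 (d u l : ℕ → ℂ) (k : ℕ) :
    ((triM d u l (k+2)).submatrix (Fin.last (k+1)).succAbove
        ((Fin.last k).castSucc.succAbove)).det
      = u k * (triM d u l k).det := by
  set B := (triM d u l (k+2)).submatrix (Fin.last (k+1)).succAbove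
      ((Fin.last k).castSucc.succAbove) with hB
  have hcol : ∀ i : Fin (k+1), B i (Fin.last k)
      = (if (i:ℕ) = k then u k else 0) := by
    intro i
    have h1 : (Fin.last k).castSucc.succAbove (Fin.last k) = (Fin.last k).succ :=
      Fin.succAbove_castSucc_of_le _ _ (le_refl _)
    rw [hB, Matrix.submatrix_apply, Fin.succAbove_last, h1, triM_apply]
    have hi : (i.castSucc : ℕ) = (i : ℕ) := rfl
    have hs : ((Fin.last k).succ : ℕ) = k + 1 := rfl
    rw [hi, hs]
    have hilt : (i : ℕ) < k + 1 := i.isLt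
    by_cases h : (i : ℕ) = k
    · simp [h]
    · have : ¬ ((i:ℕ) = k + 1) := by omega
      have h2 : ¬ ((i:ℕ) + 1 = k + 1) := by omega
      have h3 : ¬ ((k:ℕ) + 1 + 1 = i) := by omega
      simp [this, h2, h3, h]
  rw [Matrix.det_succ_column B (Fin.last k), Fin.sum_univ_castSucc]
  have hz : ∀ i : Fin k,
      (-1:ℂ) ^ ((i.castSucc : ℕ) + (Fin.last k : ℕ)) * B i.castSucc (Fin.last k) *
        (B.submatrix i.castSucc.succAbove (Fin.last k).succAbove).det = 0 := by
    intro i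
    rw [hcol]
    have : ¬ ((i : ℕ) = k) := by have := i.isLt; omega
    simp [this]
  have hmin : B.submatrix (Fin.last k).succAbove (Fin.last k).succAbove = triM d u l k := by
    ext i j
    simp only [hB, Matrix.submatrix_apply, Fin.succAbove_last]
    have h1 : (Fin.last k).castSucc.succAbove j.castSucc = (j.castSucc).castSucc :=
      Fin.succAbove_castSucc_of_lt _ _ (Fin.castSucc_lt_last j)
    rw [h1, triM_apply, triM_apply]
    rfl
  rw [Finset.sum_eq_zero (fun i _ => hz i), zero_add, hcol, hmin]
  have hsign : (-1:ℂ)^(((Fin.last k : Fin (k+1)) : ℕ) + ((Fin.last k : Fin (k+1)) : ℕ)) = 1 :=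
    Even.neg_one_pow ⟨k, rfl⟩
  rw [hsign]
  simp

lemma triM_rec (d u l : ℕ → ℂ) (k : ℕ) :
    (triM d u l (k+2)).det
      = d (k+1) * (triM d u l (k+1)).det - u k * l k * (triM d u l k).det := by
  rw [Matrix.det_succ_row (triM d u l (k+2)) (Fin.last (k+1)),
    Fin.sum_univ_castSucc, Fin.sum_univ_castSucc]
  have hrow : ∀ j : Fin (k+2), (j : ℕ) < k → triM d u l (k+2) (Fin.last (k+1)) j = 0 := by
    intro j hj
    rw [triM_apply]
    simp only [Fin.val_last]
    split_ifs <;> first | rfl | omega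
  have hz : ∀ j : Fin k,
      (-1:ℂ) ^ (((Fin.last (k+1) : Fin (k+2)) : ℕ) + ((j.castSucc.castSucc : Fin (k+2)) : ℕ)) *
          triM d u l (k+2) (Fin.last (k+1)) j.castSucc.castSucc *
        ((triM d u l (k+2)).submatrix (Fin.last (k+1)).succAbove
          (j.castSucc.castSucc).succAbove).det = 0 := by
    intro j
    rw [hrow _ (by simp)]
    ring
  rw [Finset.sum_eq_zero (fun j _ => hz j), zero_add]
  have hmid : triM d u l (k+2) (Fin.last (k+1)) ((Fin.last k).castSucc) = l k := by
    rw [triM_apply]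
    simp only [Fin.val_last, Fin.coe_castSucc]
    split_ifs <;> first | rfl | omega
  have hlast : triM d u l (k+2) (Fin.last (k+1)) (Fin.last (k+1)) = d (k+1) := by
    rw [triM_apply, if_pos rfl]
    rfl
  rw [hmid, hlast, triM_minor2, triM_minor1]
  simp only [Fin.val_last, Fin.coe_castSucc]
  have hs1 : (-1:ℂ)^(k+1+k) = -1 := Odd.neg_one_pow ⟨k, by ring⟩
  have hs2 : (-1:ℂ)^(k+1+(k+1)) = 1 := Even.neg_one_pow ⟨k+1, by ring⟩
  rw [hs1, hs2]
  ring

lemma triM_det_one (d u l : ℕ → ℂ) : (triM d u l 1).det = d 0 := by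
  rw [Matrix.det_fin_one, triM_apply]
  rfl

lemma triM_det_two (d u l : ℕ → ℂ) : (triM d u l 2).det = d 0 * d 1 - u 0 * l 0 := by
  rw [Matrix.det_fin_two]
  have h00 : triM d u l 2 0 0 = d 0 := by rw [triM_apply]; rfl
  have h11 : triM d u l 2 1 1 = d 1 := by rw [triM_apply]; rfl
  have h01 : triM d u l 2 0 1 = u 0 := by rw [triM_apply]; rfl
  have h10 : triM d u l 2 1 0 = l 0 := by rw [triM_apply]; rfl
  rw [h00, h11, h01, h10]

/-- Diagonal sequence for `matA n x I`. -/
noncomputable def dS (x : ℂ) : ℕ → ℂ := fun _ => x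
/-- Superdiagonal sequence for `matA n x I`. -/
noncomputable def uS (n : ℕ) : ℕ → ℂ := fun j =>
  if j = 0 then 2 * Complex.I else if j = n - 2 then Complex.I else -Complex.I
/-- Subdiagonal sequence for `matA n x I`. -/
noncomputable def lS (n : ℕ) : ℕ → ℂ := fun j =>
  if j = 0 then Complex.I else if j = n - 2 then 2 * Complex.I else -Complex.I

lemma matA_eq (n : ℕ) (hn : 5 ≤ n) (x : ℂ) :
    matA n x Complex.I = triM (dS x) (uS n) (lS n) n := by
  ext i j
  have hi := i.isLt
  have hj := j.isLt
  rw [triM_apply]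
  simp only [matA, Matrix.of_apply, dS, uS, lS]
  split_ifs <;> first | rfl | omega

/-- For `n ≥ 5` and `x : ℂ`, the matrix `A` with `a := x`, `b := i` satisfies
`det A = (x² + 4)·F_{n-1}(x)`, where `F` are the Fibonacci polynomials. -/
theorem det_matA_fibP (n : ℕ) (hn : 5 ≤ n) (x : ℂ) :
    Matrix.det (matA n x Complex.I) = (x ^ 2 + 4) * fibP x (n - 1) := by
  rw [matA_eq n hn x]
  obtain ⟨m, rfl⟩ : ∃ m, n = m + 5 := ⟨n - 5, by omega⟩
  set d := dS x with hd
  set u := uS (m+5) with hu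
  set l := lS (m+5) with hl
  have humid : ∀ j, 1 ≤ j → j ≤ m + 2 → u j = -Complex.I := by
    intro j h1 h2
    rw [hu]; unfold uS
    rw [if_neg (by omega), if_neg (by omega)]
  have hlmid : ∀ j, 1 ≤ j → j ≤ m + 2 → l j = -Complex.I := by
    intro j h1 h2
    rw [hl]; unfold lS
    rw [if_neg (by omega), if_neg (by omega)]
  have key : ∀ j, j ≤ m + 3 → (triM d u l (j+1)).det = fibP x (j+2) + fibP x j := by
    intro j
    induction j using Nat.strong_induction_on with
    | _ j ih =>
      intro hj
      match j, ih, hj with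
      | 0, ih, hj =>
        rw [triM_det_one]
        simp [hd, dS, fibP]
      | 1, ih, hj =>
        rw [triM_det_two]
        have hu0 : u 0 = 2 * Complex.I := by simp [hu, uS]
        have hl0 : l 0 = Complex.I := by simp [hl, lS]
        rw [hu0, hl0]
        simp only [hd, dS, fibP]
        rw [mul_assoc, Complex.I_mul_I]
        ring
      | (t+2), ih, hj =>
        rw [show t+2+1 = (t+1)+2 from rfl, triM_rec,
          ih (t+1) (by omega) (by omega), ih t (by omega) (by omega),
          humid (t+1) (by omega) (by omega), hlmid (t+1) (by omega) (by omega)]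
        have hI : (-Complex.I) * (-Complex.I) = -1 := by
          rw [neg_mul_neg, Complex.I_mul_I]
        rw [hI]
        simp only [hd, dS, fibP]
        ring
  rw [show m+5 = (m+3)+2 from rfl, triM_rec,
    show m+3+1 = (m+3)+1 from rfl, key (m+3) le_rfl,
    show m+3 = (m+2)+1 from rfl, key (m+2) (by omega)]
  have hu3 : u (m+3) = Complex.I := by
    rw [hu]; unfold uS
    rw [if_neg (by omega), if_pos (by omega)]
  have hl3 : l (m+3) = 2 * Complex.I := by
    rw [hl]; unfold lS
    rw [if_neg (by omega), if_pos (by omega)]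
  rw [hu3, hl3, show m + 3 + 2 - 1 = m + 4 by omega]
  have hI : Complex.I * (2 * Complex.I) = -2 := by
    rw [mul_comm, mul_assoc, Complex.I_mul_I]; ring
  rw [hI]
  simp only [hd, dS, show m+2+2 = m+4 from by omega, show m+2+1+2 = m+5 from by omega, fibP]
  ring
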